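/- The relative entropy of coherence is asymptotically continuous: for density matrices ρ and σ on ℂ^d with ‖ρ − σ‖₁ ≤ ε ≤ 1, one has |C_r(ρ) − C_r(σ)| ≤ ε log₂ d + 2h(ε/2), where h is the binary entropy function. -/

import Mathlib

namespace Coherence

open Matrix
open scoped BigOperators ComplexOrder

variable {ι κ : Type*} [Fintype ι] [DecidableEq ι] [Fintype κ] [DecidableEq κ]

/-- A density matrix: positive semidefinite with unit trace. -/
def IsDensity (ρ : Matrix ι ι ℂ) : Prop := ρ.PosSemidef ∧ ρ.trace = 1

/-- The dephasing (decohering) map Δ in the fixed (incoherent) basis. -/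
def dephase (ρ : Matrix ι ι ℂ) : Matrix ι ι ℂ := Matrix.diagonal (fun i => ρ i i)

/-- The pure state |v⟩⟨v| associated with a vector `v`. -/
def pureState (v : ι → ℂ) : Matrix ι ι ℂ := Matrix.of fun i j => v i * star (v j)

/-- `v` is a unit vector. -/
def IsUnitVec (v : ι → ℂ) : Prop := ∑ i, ‖v i‖ ^ 2 = 1

/-- An incoherent Kraus operator: each column has at most one nonzero entry,
i.e. `K = ∑ i c(i) |j(i)⟩⟨i|` for a function `j` on basis indices. -/
def IncoherentKraus (K : Matrix κ ι ℂ) : Prop :=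
  ∀ i : ι, ∃ j : κ, ∀ j' : κ, K j' i ≠ 0 → j' = j

/-- A strictly incoherent Kraus operator: `K` and `K†` are both incoherent. -/
def StrictlyIncoherentKraus (K : Matrix κ ι ℂ) : Prop :=
  IncoherentKraus K ∧ IncoherentKraus Kᴴ

/-- An incoherent operation: a cptp map admitting a Kraus representation by
incoherent Kraus operators. -/
def IsIncoherentOp (T : Matrix ι ι ℂ → Matrix κ κ ℂ) : Prop :=
  ∃ (m : ℕ) (K : Fin m → Matrix κ ι ℂ),
    (∀ ℓ, IncoherentKraus (K ℓ)) ∧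
    (∑ ℓ, (K ℓ)ᴴ * K ℓ = 1) ∧
    (∀ ρ, T ρ = ∑ ℓ, K ℓ * ρ * (K ℓ)ᴴ)

/-- A strictly incoherent operation. -/
def IsStrictlyIncoherentOp (T : Matrix ι ι ℂ → Matrix κ κ ℂ) : Prop :=
  ∃ (m : ℕ) (K : Fin m → Matrix κ ι ℂ),
    (∀ ℓ, StrictlyIncoherentKraus (K ℓ)) ∧
    (∑ ℓ, (K ℓ)ᴴ * K ℓ = 1) ∧
    (∀ ρ, T ρ = ∑ ℓ, K ℓ * ρ * (K ℓ)ᴴ)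

/-- Functional calculus for Hermitian matrices (junk value `0` otherwise). -/
noncomputable def matFun (f : ℝ → ℝ) (A : Matrix ι ι ℂ) : Matrix ι ι ℂ :=
  if h : A.IsHermitian then
    (h.eigenvectorUnitary : Matrix ι ι ℂ) *
      Matrix.diagonal (fun i => (f (h.eigenvalues i) : ℂ)) *
      (star (h.eigenvectorUnitary : Matrix ι ι ℂ))
  else 0

/-- Von Neumann entropy `S(ρ) = −tr ρ log₂ ρ` (with the convention 0 log 0 = 0). -/
noncomputable def vN (ρ : Matrix ι ι ℂ) : ℝ :=
  if h : ρ.IsHermitian then -∑ i, h.eigenvalues i * Real.logb 2 (h.eigenvalues i) else 0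

noncomputable def matLog2 (A : Matrix ι ι ℂ) : Matrix ι ι ℂ := matFun (Real.logb 2) A

noncomputable def matSqrt (A : Matrix ι ι ℂ) : Matrix ι ι ℂ := matFun Real.sqrt A

/-- Quantum relative entropy `S(ρ‖σ) = tr ρ (log₂ ρ − log₂ σ)`. -/
noncomputable def relEnt (ρ σ : Matrix ι ι ℂ) : ℝ :=
  ((ρ * (matLog2 ρ - matLog2 σ)).trace).re

/-- Fidelity `F(ρ,σ) = tr √(√ρ σ √ρ)`. -/
noncomputable def fidelity (ρ σ : Matrix ι ι ℂ) : ℝ :=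
  ((matSqrt (matSqrt ρ * σ * matSqrt ρ)).trace).re

/-- Trace norm `‖A‖₁ = tr √(A†A)`. -/
noncomputable def traceNorm (A : Matrix ι ι ℂ) : ℝ :=
  ((matSqrt (Aᴴ * A)).trace).re

/-- Bures distance `B(ρ,σ) = √2 √(1 − F(ρ,σ))`. -/
noncomputable def bures (ρ σ : Matrix ι ι ℂ) : ℝ :=
  Real.sqrt 2 * Real.sqrt (1 - fidelity ρ σ)

/-- Binary entropy function. -/
noncomputable def binEnt (x : ℝ) : ℝ :=
  -(x * Real.logb 2 x) - (1 - x) * Real.logb 2 (1 - x)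

/-- The `n`-fold tensor (Kronecker) power of a matrix, with indices the product basis. -/
def tpow (ρ : Matrix ι ι ℂ) (n : ℕ) : Matrix (Fin n → ι) (Fin n → ι) ℂ :=
  Matrix.of fun i j => ∏ t, ρ (i t) (j t)

/-- The unit (qubit maximally coherent) state Φ₂. -/
noncomputable def Phi2 : Matrix (Fin 2) (Fin 2) ℂ := Matrix.of fun _ _ => (1 / 2 : ℂ)

/-- Relative entropy of coherence `C_r(ρ) = S(Δ(ρ)) − S(ρ)`. -/
noncomputable def Cr (ρ : Matrix ι ι ℂ) : ℝ := vN (dephase ρ) - vN ρ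

/-- Coherence of formation: the least average entropy of coherence over finite
pure-state decompositions of `ρ`. -/
noncomputable def Cf (ρ : Matrix ι ι ℂ) : ℝ :=
  sInf {x | ∃ (m : ℕ) (p : Fin m → ℝ) (v : Fin m → ι → ℂ),
    (∀ k, 0 ≤ p k) ∧ (∀ k, IsUnitVec (v k)) ∧
    ρ = ∑ k, (p k : ℂ) • pureState (v k) ∧
    x = ∑ k, p k * vN (dephase (pureState (v k)))}

/-- `R` is an achievable coherence-distillation rate for `ρ`. -/
def DistillRate {d : ℕ} (ρ : Matrix (Fin d) (Fin d) ℂ) (R : ℝ) : Prop :=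
  0 ≤ R ∧ ∀ ε > 0, ∃ N : ℕ, ∀ n ≥ N,
    ∃ T : Matrix (Fin n → Fin d) (Fin n → Fin d) ℂ →
          Matrix (Fin ⌊(n : ℝ) * R⌋₊ → Fin 2) (Fin ⌊(n : ℝ) * R⌋₊ → Fin 2) ℂ,
      IsIncoherentOp T ∧ 1 - ε ≤ fidelity (T (tpow ρ n)) (tpow Phi2 ⌊(n : ℝ) * R⌋₊)

/-- Distillable coherence. -/
noncomputable def Cd {d : ℕ} (ρ : Matrix (Fin d) (Fin d) ℂ) : ℝ :=
  sSup {R | DistillRate ρ R}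

/-- `R` is an achievable coherence-formation rate for `ρ`. -/
def FormRate {d : ℕ} (ρ : Matrix (Fin d) (Fin d) ℂ) (R : ℝ) : Prop :=
  0 ≤ R ∧ ∀ ε > 0, ∃ N : ℕ, ∀ n ≥ N,
    ∃ T : Matrix (Fin ⌈(n : ℝ) * R⌉₊ → Fin 2) (Fin ⌈(n : ℝ) * R⌉₊ → Fin 2) ℂ →
          Matrix (Fin n → Fin d) (Fin n → Fin d) ℂ,
      IsIncoherentOp T ∧ 1 - ε ≤ fidelity (T (tpow Phi2 ⌈(n : ℝ) * R⌉₊)) (tpow ρ n)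

/-- Coherence cost. -/
noncomputable def Cc {d : ℕ} (ρ : Matrix (Fin d) (Fin d) ℂ) : ℝ :=
  sInf {R | FormRate ρ R}

/-- Sum of the `t` largest entries of the vector `p` (as a sup over size-`t` subsets). -/
noncomputable def sumTop (p : ι → ℝ) (t : ℕ) : ℝ :=
  sSup {x | ∃ A : Finset ι, A.card = t ∧ x = ∑ i ∈ A, p i}

/-- The spectrum of a Hermitian matrix (junk value `0` otherwise). -/
noncomputable def matSpectrum (A : Matrix ι ι ℂ) : ι → ℝ :=
  if h : A.IsHermitian then h.eigenvalues else 0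

/-- `A ≻ B`: the spectrum of `A` majorizes the spectrum of `B`. -/
def MajorizesMat (A B : Matrix ι ι ℂ) : Prop :=
  (∀ t : ℕ, sumTop (matSpectrum B) t ≤ sumTop (matSpectrum A) t) ∧
  ∑ i, matSpectrum A i = ∑ i, matSpectrum B i


section ClassicalFannes
open Real Finset


lemma nml_subadd {x y : ℝ} (hx : 0 ≤ x) (hy : 0 ≤ y) :
    negMulLog (x + y) ≤ negMulLog x + negMulLog y := by
  rcases hx.eq_or_lt with h|h
  · simp [← h]
  rcases hy.eq_or_lt with h'|h'
  · simp [← h']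
  have l1 : Real.log x ≤ Real.log (x + y) := Real.log_le_log h (by linarith)
  have l2 : Real.log y ≤ Real.log (x + y) := Real.log_le_log h' (by linarith)
  simp only [Real.negMulLog, neg_mul]
  nlinarith

lemma nml_sum_ge {ι : Type*} (s : Finset ι) (f : ι → ℝ) (hf : ∀ i ∈ s, 0 ≤ f i) :
    negMulLog (∑ i ∈ s, f i) ≤ ∑ i ∈ s, negMulLog (f i) := by
  induction s using Finset.cons_induction with
  | empty => simp
  | cons a s ha ih =>
    rw [Finset.sum_cons, Finset.sum_cons]
    calc negMulLog (f a + ∑ i ∈ s, f i)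
        ≤ negMulLog (f a) + negMulLog (∑ i ∈ s, f i) :=
          nml_subadd (hf a (mem_cons_self a s))
            (Finset.sum_nonneg fun i hi => hf i (mem_cons_of_mem hi))
      _ ≤ _ := by
          gcongr
          exact ih fun i hi => hf i (mem_cons_of_mem hi)

lemma nml_sum_le {ι : Type*} (s : Finset ι) (f : ι → ℝ) (hf : ∀ i ∈ s, 0 ≤ f i)
    {n : ℕ} (hn : s.card ≤ n) :
    ∑ i ∈ s, negMulLog (f i) ≤ negMulLog (∑ i ∈ s, f i) + (∑ i ∈ s, f i) * Real.log n := by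
  rcases Finset.eq_empty_or_nonempty s with rfl|hs
  · simp
  have hcard : (0:ℝ) < s.card := by exact_mod_cast Finset.card_pos.mpr hs
  set t := ∑ i ∈ s, f i with ht
  have ht0 : 0 ≤ t := Finset.sum_nonneg hf
  -- Jensen
  have hj : ∑ i ∈ s, ((s.card : ℝ)⁻¹) • negMulLog (f i) ≤
      negMulLog (∑ i ∈ s, ((s.card : ℝ)⁻¹) • f i) := by
    apply Real.concaveOn_negMulLog.le_map_sum
    · intro i _; positivity
    · rw [Finset.sum_const, nsmul_eq_mul]
      field_simp
    · intro i hi; exact hf i hi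
  simp only [smul_eq_mul, ← Finset.mul_sum] at hj
  -- hj : (s.card)⁻¹ * ∑ nml (f i) ≤ nml ((s.card)⁻¹ * t)
  have key : (s.card : ℝ) * negMulLog ((s.card : ℝ)⁻¹ * t) ≤ negMulLog t + t * Real.log n := by
    rcases ht0.eq_or_lt with h0|h0
    · rw [← h0]; simp
    · have hcne : (s.card : ℝ) ≠ 0 := ne_of_gt hcard
      have hls : Real.log ((s.card : ℝ)⁻¹ * t) = Real.log t - Real.log s.card := by
        rw [Real.log_mul (inv_ne_zero hcne) (ne_of_gt h0), Real.log_inv]; ring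
      have : negMulLog ((s.card : ℝ)⁻¹ * t) = -((s.card : ℝ)⁻¹ * t) * (Real.log t - Real.log s.card) := by
        rw [Real.negMulLog, hls]
      rw [this, Real.negMulLog]
      have hlog : Real.log s.card ≤ Real.log n := by
        apply Real.log_le_log hcard
        exact_mod_cast hn
      have expand : (s.card : ℝ) * (-((s.card : ℝ)⁻¹ * t) * (Real.log t - Real.log s.card))
          = -t * Real.log t + t * Real.log s.card := by
        field_simp
        ring
      rw [expand]
      nlinarith
  calc ∑ i ∈ s, negMulLog (f i)
      = (s.card : ℝ) * ((s.card : ℝ)⁻¹ * ∑ i ∈ s, negMulLog (f i)) := by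
        field_simp
    _ ≤ (s.card : ℝ) * negMulLog ((s.card : ℝ)⁻¹ * t) := by
        apply mul_le_mul_of_nonneg_left hj (le_of_lt hcard)
    _ ≤ negMulLog t + t * Real.log n := key


lemma classical_fannes {d : ℕ} (p q : Fin d → ℝ)
    (hp0 : ∀ i, 0 ≤ p i) (hq0 : ∀ i, 0 ≤ q i)
    (hp1 : ∑ i, p i = 1) (hq1 : ∑ i, q i = 1) :
    ∑ i, negMulLog (p i) - ∑ i, negMulLog (q i) ≤
      ((∑ i, |p i - q i|) / 2) * Real.log d + Real.binEntropy ((∑ i, |p i - q i|) / 2) := by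
  classical
  set m : Fin d → ℝ := fun i => min (p i) (q i) with hm
  set a : Fin d → ℝ := fun i => p i - m i with ha
  set b : Fin d → ℝ := fun i => q i - m i with hb
  set T : ℝ := (∑ i, |p i - q i|) / 2 with hT
  have hm0 : ∀ i, 0 ≤ m i := fun i => le_min (hp0 i) (hq0 i)
  have ha0 : ∀ i, 0 ≤ a i := fun i => sub_nonneg.mpr (min_le_left _ _)
  have hb0 : ∀ i, 0 ≤ b i := fun i => sub_nonneg.mpr (min_le_right _ _)
  have hab : ∀ i, a i * b i = 0 := by
    intro i
    rcases le_total (p i) (q i) with h|h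
    · have : m i = p i := min_eq_left h
      simp [ha, this]
    · have : m i = q i := min_eq_right h
      simp [hb, this]
  have habs : ∀ i, |p i - q i| = a i + b i := by
    intro i
    rcases le_total (p i) (q i) with h|h
    · have hmi : m i = p i := min_eq_left h
      rw [abs_of_nonpos (by linarith)]
      simp [ha, hb, hmi]
    · have hmi : m i = q i := min_eq_right h
      rw [abs_of_nonneg (by linarith)]
      simp [ha, hb, hmi]
  have hsum_ab : ∑ i, a i = ∑ i, b i := by
    simp only [ha, hb, Finset.sum_sub_distrib, hp1, hq1]
  have hTb : T = ∑ i, b i := by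
    rw [hT]
    rw [Finset.sum_congr rfl fun i _ => habs i, Finset.sum_add_distrib, hsum_ab]
    ring
  have hT0 : 0 ≤ T := by
    rw [hTb]; exact Finset.sum_nonneg fun i _ => hb0 i
  rcases hT0.eq_or_lt with hT00|hTpos
  · -- T = 0 : p = q
    have hb00 : ∀ i ∈ Finset.univ, b i = 0 := by
      intro i _
      have := (Finset.sum_eq_zero_iff_of_nonneg (fun i _ => hb0 i)).mp (hTb ▸ hT00.symm)
      exact this i (Finset.mem_univ i)
    have ha00 : ∀ i ∈ Finset.univ, a i = 0 := by
      have : ∑ i, a i = 0 := by rw [hsum_ab, ← hTb, ← hT00]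
      exact fun i _ => (Finset.sum_eq_zero_iff_of_nonneg (fun i _ => ha0 i)).mp this i (Finset.mem_univ i)
    have hpq : ∀ i, p i = q i := by
      intro i
      have h1 := ha00 i (Finset.mem_univ i)
      have h2 := hb00 i (Finset.mem_univ i)
      simp only [ha, hb] at h1 h2
      linarith
    rw [← hT00]
    simp [Finset.sum_congr rfl fun i _ => congrArg negMulLog (hpq i)]
  -- main case
  have hTne : T ≠ 0 := ne_of_gt hTpos
  set w : Fin d → Fin d → ℝ := fun i j => if i = j then m i else a i * b j / T with hw
  have hw0 : ∀ i j, 0 ≤ w i j := by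
    intro i j
    by_cases h : i = j
    · simp [hw, h]; exact hm0 j
    · simp only [hw, if_neg h]
      exact div_nonneg (mul_nonneg (ha0 i) (hb0 j)) hT0
  have hrow : ∀ i, ∑ j, w i j = p i := by
    intro i
    rw [← Finset.add_sum_erase _ _ (Finset.mem_univ i)]
    have h2 : ∑ j ∈ Finset.univ.erase i, w i j = (a i / T) * ∑ j ∈ Finset.univ.erase i, b j := by
      rw [Finset.mul_sum]
      apply Finset.sum_congr rfl
      intro j hj
      have hne : i ≠ j := fun h => (Finset.mem_erase.mp hj).1 h.symm
      simp only [hw, if_neg hne]; ring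
    have h3 : ∑ j ∈ Finset.univ.erase i, b j = T - b i := by
      rw [Finset.sum_erase_eq_sub (Finset.mem_univ i), ← hTb]
    have h4 : (a i / T) * (T - b i) = a i := by
      have heq : a i * (T - b i) = a i * T := by linear_combination -(hab i)
      rw [div_mul_eq_mul_div, heq, mul_div_assoc, div_self hTne, mul_one]
    have h5 : w i i = m i := if_pos rfl
    rw [h5, h2, h3, h4]
    simp only [ha]; ring
  have hcol : ∀ j, ∑ i, w i j = q j := by
    intro j
    rw [← Finset.add_sum_erase _ _ (Finset.mem_univ j)]
    have h2 : ∑ i ∈ Finset.univ.erase j, w i j = (b j / T) * ∑ i ∈ Finset.univ.erase j, a i := by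
      rw [Finset.mul_sum]
      apply Finset.sum_congr rfl
      intro i hi
      have hne : i ≠ j := (Finset.mem_erase.mp hi).1
      simp only [hw, if_neg hne]; ring
    have h3 : ∑ i ∈ Finset.univ.erase j, a i = T - a j := by
      rw [Finset.sum_erase_eq_sub (Finset.mem_univ j), hsum_ab, ← hTb]
    have h4 : (b j / T) * (T - a j) = b j := by
      have heq : b j * (T - a j) = b j * T := by linear_combination -(hab j)
      rw [div_mul_eq_mul_div, heq, mul_div_assoc, div_self hTne, mul_one]
    have h5 : w j j = m j := if_pos rfl
    rw [h5, h2, h3, h4]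
    simp only [hb]; ring
  set t : Fin d → ℝ := fun j => b j / q j with htdef
  have hbq : ∀ j, b j ≤ q j := by
    intro j; simp only [hb]; linarith [hm0 j]
  have ht0 : ∀ j, 0 ≤ t j := fun j => div_nonneg (hb0 j) (hq0 j)
  have ht1 : ∀ j, t j ≤ 1 := by
    intro j
    rcases (hq0 j).eq_or_lt with h|h
    · simp only [htdef, ← h, div_zero]; norm_num
    · exact (div_le_one h).mpr (hbq j)
  have hqt : ∀ j, q j * t j = b j := by
    intro j
    rcases (hq0 j).eq_or_lt with h|h
    · have : b j = 0 := le_antisymm (h ▸ hbq j) (hb0 j)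
      rw [← h, this, zero_mul]
    · simp only [htdef]
      rw [mul_div_cancel₀ _ (ne_of_gt h)]
  have step1 : ∑ i, negMulLog (p i) ≤ ∑ i, ∑ j, negMulLog (w i j) := by
    apply Finset.sum_le_sum
    intro i _
    rw [← hrow i]
    exact nml_sum_ge _ _ (fun j _ => hw0 i j)
  have step2 : ∀ j, ∑ i, negMulLog (w i j) ≤
      negMulLog (q j) + q j * (Real.binEntropy (t j) + t j * Real.log d) := by
    intro j
    rcases (hq0 j).eq_or_lt with hqj|hqj
    · have hbj : b j = 0 := le_antisymm (hqj ▸ hbq j) (hb0 j)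
      have hmj : m j = 0 := le_antisymm ((min_le_right (p j) (q j)).trans hqj.ge) (hm0 j)
      have hwz : ∀ i, w i j = 0 := by
        intro i
        by_cases h : i = j
        · subst h; simp only [hw, if_pos rfl]; exact hmj
        · simp only [hw, if_neg h, hbj, mul_zero, zero_div]
      have htj : t j = 0 := by simp only [htdef, hbj, zero_div]
      simp [hwz, ← hqj, htj]
    · have hqjne : q j ≠ 0 := ne_of_gt hqj
      set c : Fin d → ℝ := fun i => w i j / q j with hcdef
      have hc0 : ∀ i, 0 ≤ c i := fun i => div_nonneg (hw0 i j) (hq0 j)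
      have hcsum : ∑ i, c i = 1 := by
        simp only [hcdef, ← Finset.sum_div, hcol j, div_self hqjne]
      have hdecomp : ∀ i, negMulLog (w i j) = c i * negMulLog (q j) + q j * negMulLog (c i) := by
        intro i
        have : w i j = q j * c i := by
          simp only [hcdef]; rw [mul_div_cancel₀ _ hqjne]
        rw [this, Real.negMulLog_mul]
      rw [Finset.sum_congr rfl fun i _ => hdecomp i, Finset.sum_add_distrib, ← Finset.sum_mul,
        hcsum, one_mul, ← Finset.mul_sum]
      have hcj : c j = 1 - t j := by
        have hwjj : w j j = m j := if_pos rfl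
        have hmjq : m j = q j - b j := by simp only [hb]; ring
        simp only [hcdef, hwjj, hmjq, htdef]
        field_simp
      have herase : ∑ i ∈ Finset.univ.erase j, c i = t j := by
        rw [Finset.sum_erase_eq_sub (Finset.mem_univ j), hcsum, hcj]; ring
      have hbound := nml_sum_le (Finset.univ.erase j) c (fun i _ => hc0 i) (n := d)
        (by simp [Finset.card_erase_of_mem])
      rw [herase] at hbound
      have hsplit : ∑ i, negMulLog (c i) =
          negMulLog (c j) + ∑ i ∈ Finset.univ.erase j, negMulLog (c i) :=
        (Finset.add_sum_erase _ _ (Finset.mem_univ j)).symm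
      have hinner : ∑ i, negMulLog (c i) ≤ Real.binEntropy (t j) + t j * Real.log d := by
        rw [hsplit, hcj, Real.binEntropy_eq_negMulLog_add_negMulLog_one_sub]
        linarith
      have := mul_le_mul_of_nonneg_left hinner (hq0 j)
      linarith
  have hsum_bT : ∑ j, q j * t j = T := by
    rw [Finset.sum_congr rfl fun j _ => hqt j, ← hTb]
  have jensen : ∑ j, q j * Real.binEntropy (t j) ≤ Real.binEntropy T := by
    have h := (Real.strictConcave_binEntropy.concaveOn).le_map_sum
      (t := Finset.univ) (w := q) (p := t) (fun j _ => hq0 j) hq1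
      (fun j _ => Set.mem_Icc.mpr ⟨ht0 j, ht1 j⟩)
    simp only [smul_eq_mul] at h
    rwa [hsum_bT] at h
  have step3 : ∑ i, ∑ j, negMulLog (w i j) ≤
      ∑ j, negMulLog (q j) + Real.binEntropy T + T * Real.log d := by
    rw [Finset.sum_comm]
    calc ∑ j, ∑ i, negMulLog (w i j)
        ≤ ∑ j, (negMulLog (q j) + q j * (Real.binEntropy (t j) + t j * Real.log d)) :=
          Finset.sum_le_sum fun j _ => step2 j
      _ = ∑ j, negMulLog (q j) + ∑ j, q j * Real.binEntropy (t j)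
            + (∑ j, q j * t j) * Real.log d := by
          have hre : ∑ j, q j * (Real.binEntropy (t j) + t j * Real.log d) =
              ∑ j, q j * Real.binEntropy (t j) + (∑ j, q j * t j) * Real.log d := by
            rw [Finset.sum_mul, ← Finset.sum_add_distrib]
            apply Finset.sum_congr rfl
            intro j _
            ring
          rw [Finset.sum_add_distrib, hre]
          ring
      _ ≤ ∑ j, negMulLog (q j) + Real.binEntropy T + T * Real.log d := by
          rw [hsum_bT]
          linarith
  linarith


end ClassicalFannes



lemma matFun_mul_matFun {A : Matrix ι ι ℂ} (hA : A.IsHermitian) (f g : ℝ → ℝ) :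
    matFun f A * matFun g A = matFun (fun x => f x * g x) A := by
  unfold matFun
  rw [dif_pos hA, dif_pos hA, dif_pos hA]
  set U : Matrix ι ι ℂ := (hA.eigenvectorUnitary : Matrix ι ι ℂ) with hUdef
  have hU : star U * U = 1 := Matrix.mem_unitaryGroup_iff'.mp hA.eigenvectorUnitary.2
  set D1 : Matrix ι ι ℂ := Matrix.diagonal (fun i => (f (hA.eigenvalues i) : ℂ))
  set D2 : Matrix ι ι ℂ := Matrix.diagonal (fun i => (g (hA.eigenvalues i) : ℂ))
  calc (U * D1 * star U) * (U * D2 * star U)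
      = U * D1 * (star U * U) * D2 * star U := by noncomm_ring
    _ = U * (D1 * D2) * star U := by rw [hU]; noncomm_ring
    _ = U * Matrix.diagonal (fun i => ((f (hA.eigenvalues i) * g (hA.eigenvalues i) : ℝ) : ℂ)) * star U := by
        rw [Matrix.diagonal_mul_diagonal]
        push_cast
        rfl

lemma matFun_posSemidef {A : Matrix ι ι ℂ} (hA : A.IsHermitian) (f : ℝ → ℝ)
    (hf : ∀ x, 0 ≤ f x) : (matFun f A).PosSemidef := by
  unfold matFun
  rw [dif_pos hA]
  rw [Matrix.star_eq_conjTranspose]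
  exact (Matrix.posSemidef_diagonal_iff.mpr
    (fun i => by exact_mod_cast hf (hA.eigenvalues i))).mul_mul_conjTranspose_same _

lemma trace_matFun {A : Matrix ι ι ℂ} (hA : A.IsHermitian) (f : ℝ → ℝ) :
    (matFun f A).trace = ∑ i, (f (hA.eigenvalues i) : ℂ) := by
  unfold matFun
  rw [dif_pos hA, Matrix.trace_mul_cycle,
    Matrix.mem_unitaryGroup_iff'.mp hA.eigenvectorUnitary.2, one_mul, Matrix.trace_diagonal]

lemma matFun_id {A : Matrix ι ι ℂ} (hA : A.IsHermitian) : matFun (fun x => x) A = A := by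
  unfold matFun
  rw [dif_pos hA]
  exact hA.spectral_theorem.symm

open scoped MatrixOrder in
lemma matSqrt_eq {B : Matrix ι ι ℂ} (hB : B.PosSemidef) : matSqrt B = CFC.sqrt B := by
  unfold matSqrt matFun
  rw [dif_pos hB.1, CFC.sqrt_eq_real_sqrt B hB.nonneg, cfcₙ_eq_cfc, hB.1.cfc_eq, IsHermitian.cfc,
    Unitary.conjStarAlgAut_apply]
  rfl

open scoped MatrixOrder in
lemma eq_sqrt_of_sq_eq' {N B : Matrix ι ι ℂ} (hN : N.PosSemidef) (_hB : B.PosSemidef)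
    (h : N ^ 2 = B) : N = CFC.sqrt B :=
  (CFC.sqrt_unique (a := B) (b := N) (by rw [← sq]; exact h) hN.nonneg).symm

open scoped MatrixOrder in
lemma traceNorm_eq_sum_abs {A : Matrix ι ι ℂ} (hA : A.IsHermitian) :
    traceNorm A = ∑ i, |hA.eigenvalues i| := by
  have habs : (matFun (fun x => |x|) A).PosSemidef :=
    matFun_posSemidef hA _ (fun x => abs_nonneg x)
  have hPSD : (Aᴴ * A).PosSemidef := Matrix.posSemidef_conjTranspose_mul_self A
  have hAA : Aᴴ * A = matFun (fun x => x * x) A := by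
    rw [hA.eq]
    nth_rewrite 1 [← matFun_id hA]
    nth_rewrite 2 [← matFun_id hA]
    exact matFun_mul_matFun hA _ _
  have hsq : (matFun (fun x => |x|) A) ^ 2 = Aᴴ * A := by
    rw [pow_two, matFun_mul_matFun hA, hAA]
    congr 1
    funext x
    simp [abs_mul_abs_self]
  have h1 : matFun (fun x => |x|) A = CFC.sqrt (Aᴴ * A) := eq_sqrt_of_sq_eq' habs hPSD hsq
  unfold traceNorm
  rw [matSqrt_eq hPSD, ← h1, trace_matFun hA]
  rw [Complex.re_sum]
  simp

lemma conj_diag_re (M : Matrix ι ι ℂ) (f : ι → ℝ) (i : ι) :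
    ((M * Matrix.diagonal (fun j => (f j : ℂ)) * Mᴴ) i i).re = ∑ j, f j * ‖M i j‖^2 := by
  have h1 : (M * Matrix.diagonal (fun j => (f j : ℂ)) * Mᴴ) i i
      = ∑ j, ((f j * ‖M i j‖^2 : ℝ) : ℂ) := by
    rw [Matrix.mul_apply]
    apply Finset.sum_congr rfl
    intro j _
    rw [Matrix.mul_diagonal, Matrix.conjTranspose_apply]
    have : M i j * star (M i j) = ((‖M i j‖^2 : ℝ) : ℂ) := by
      rw [Complex.star_def, Complex.mul_conj']
      push_cast
      rfl
    calc M i j * (f j : ℂ) * star (M i j)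
        = (f j : ℂ) * (M i j * star (M i j)) := by ring
      _ = ((f j * ‖M i j‖^2 : ℝ) : ℂ) := by rw [this]; push_cast; rfl
  rw [h1, Complex.re_sum]
  simp [← Complex.ofReal_pow]

lemma col_norm_sum {M : Matrix ι ι ℂ} (h : Mᴴ * M = 1) (j : ι) :
    ∑ i, ‖M i j‖^2 = 1 := by
  have h0 : (Mᴴ * M) j j = 1 := by rw [h]; simp
  rw [Matrix.mul_apply] at h0
  have h1 : ∀ i, Mᴴ j i * M i j = ((‖M i j‖^2 : ℝ) : ℂ) := by
    intro i
    rw [Matrix.conjTranspose_apply, mul_comm, Complex.star_def, Complex.mul_conj']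
    push_cast
    rfl
  rw [Finset.sum_congr rfl fun i _ => h1 i] at h0
  have := congrArg Complex.re h0
  rw [Complex.re_sum] at this
  simpa [← Complex.ofReal_pow] using this

lemma row_norm_sum {M : Matrix ι ι ℂ} (h : M * Mᴴ = 1) (i : ι) :
    ∑ j, ‖M i j‖^2 = 1 := by
  have h2 : (Mᴴ)ᴴ * Mᴴ = 1 := by rwa [Matrix.conjTranspose_conjTranspose]
  have := col_norm_sum h2 i
  simpa [Matrix.conjTranspose_apply] using this

/-- Conjugating a Hermitian matrix into another basis. -/
lemma conj_eq_mdm {B : Matrix ι ι ℂ} (hB : B.IsHermitian) (W : Matrix ι ι ℂ) :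
    Wᴴ * B * W = (Wᴴ * (hB.eigenvectorUnitary : Matrix ι ι ℂ)) *
      Matrix.diagonal (fun j => ((hB.eigenvalues j : ℝ) : ℂ)) *
      (Wᴴ * (hB.eigenvectorUnitary : Matrix ι ι ℂ))ᴴ := by
  nth_rewrite 1 [hB.spectral_theorem]
  rw [Unitary.conjStarAlgAut_apply, Matrix.conjTranspose_mul, Matrix.conjTranspose_conjTranspose,
    Matrix.star_eq_conjTranspose]
  noncomm_ring

lemma sum_abs_diag_le {B : Matrix ι ι ℂ} (hB : B.IsHermitian) {W : Matrix ι ι ℂ}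
    (hW1 : Wᴴ * W = 1) (hW2 : W * Wᴴ = 1) :
    ∑ i, |((Wᴴ * B * W) i i).re| ≤ traceNorm B := by
  set V : Matrix ι ι ℂ := (hB.eigenvectorUnitary : Matrix ι ι ℂ) with hV
  have hV1 : Vᴴ * V = 1 := by
    rw [← Matrix.star_eq_conjTranspose]
    exact Matrix.mem_unitaryGroup_iff'.mp hB.eigenvectorUnitary.2
  set M : Matrix ι ι ℂ := Wᴴ * V with hM
  have hMcol : Mᴴ * M = 1 := by
    rw [hM, Matrix.conjTranspose_mul, Matrix.conjTranspose_conjTranspose]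
    calc Vᴴ * W * (Wᴴ * V) = Vᴴ * (W * Wᴴ) * V := by noncomm_ring
      _ = 1 := by rw [hW2, mul_one, hV1]
  have hdiag : ∀ i, ((Wᴴ * B * W) i i).re = ∑ j, hB.eigenvalues j * ‖M i j‖^2 := by
    intro i
    rw [conj_eq_mdm hB W]
    exact conj_diag_re M _ i
  rw [traceNorm_eq_sum_abs hB]
  calc ∑ i, |((Wᴴ * B * W) i i).re|
      ≤ ∑ i, ∑ j, |hB.eigenvalues j| * ‖M i j‖^2 := by
        apply Finset.sum_le_sum
        intro i _
        rw [hdiag i]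
        calc |∑ j, hB.eigenvalues j * ‖M i j‖^2|
            ≤ ∑ j, |hB.eigenvalues j * ‖M i j‖^2| := Finset.abs_sum_le_sum_abs _ _
          _ = ∑ j, |hB.eigenvalues j| * ‖M i j‖^2 := by
              apply Finset.sum_congr rfl
              intro j _
              rw [abs_mul, abs_of_nonneg (pow_nonneg (norm_nonneg (M i j)) 2)]
    _ = ∑ j, |hB.eigenvalues j| * (∑ i, ‖M i j‖^2) := by
        rw [Finset.sum_comm]
        apply Finset.sum_congr rfl
        intro j _
        rw [Finset.mul_sum]
    _ = ∑ j, |hB.eigenvalues j| := by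
        apply Finset.sum_congr rfl
        intro j _
        rw [col_norm_sum hMcol j, mul_one]

lemma vN_eq_sum {A : Matrix ι ι ℂ} (hA : A.IsHermitian) :
    vN A = (∑ i, Real.negMulLog (hA.eigenvalues i)) / Real.log 2 := by
  unfold vN
  rw [dif_pos hA, Finset.sum_div]
  rw [← Finset.sum_neg_distrib]
  apply Finset.sum_congr rfl
  intro i _
  rw [Real.negMulLog, Real.logb]
  ring

lemma psd_diag_re_nonneg {A : Matrix ι ι ℂ} (h : A.PosSemidef) (i : ι) :
    0 ≤ (A i i).re := by
  have h2 := h.dotProduct_mulVec_nonneg (Pi.single i 1)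
  have h3 : star (Pi.single i 1) ⬝ᵥ A *ᵥ Pi.single i 1 = A i i := by
    simp [dotProduct, Matrix.mulVec, Pi.single_apply]
  rw [h3] at h2
  simpa using (Complex.le_def.mp h2).1

lemma trace_eq_sum_eigen {A : Matrix ι ι ℂ} (hA : A.IsHermitian) :
    A.trace = ∑ i, (hA.eigenvalues i : ℂ) := by
  conv_lhs => rw [← matFun_id hA]
  exact trace_matFun hA _

lemma density_sum_eigen {A : Matrix ι ι ℂ} (hA : IsDensity A) :
    ∑ i, hA.1.1.eigenvalues i = 1 := by
  have h := trace_eq_sum_eigen hA.1.1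
  have h2 := congrArg Complex.re (h.symm.trans hA.2)
  rw [Complex.re_sum] at h2
  simpa using h2

lemma isDensity_dephase {A : Matrix ι ι ℂ} (hA : IsDensity A) : IsDensity (dephase A) := by
  constructor
  · exact Matrix.posSemidef_diagonal_iff.mpr fun i => by
      have h2 := hA.1.dotProduct_mulVec_nonneg (Pi.single i 1)
      have h3 : star (Pi.single i 1) ⬝ᵥ A *ᵥ Pi.single i 1 = A i i := by
        simp [dotProduct, Matrix.mulVec, Pi.single_apply]
      rwa [h3] at h2
  · rw [← hA.2]
    unfold dephase
    rw [Matrix.trace_diagonal]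
    simp [Matrix.trace, Matrix.diag]

lemma traceNorm_neg (A : Matrix ι ι ℂ) : traceNorm (-A) = traceNorm A := by
  unfold traceNorm
  rw [Matrix.conjTranspose_neg, neg_mul_neg]

lemma herm_diag_real {B : Matrix ι ι ℂ} (hB : B.IsHermitian) (i : ι) :
    B i i = (((B i i).re : ℝ) : ℂ) := by
  have : (starRingEnd ℂ) (B i i) = B i i := by
    have := congrFun (congrFun hB.eq i) i
    rwa [Matrix.conjTranspose_apply] at this
  exact ((Complex.conj_eq_iff_re).mp this).symm

open scoped MatrixOrder in
lemma traceNorm_diag_real (v : ι → ℝ) :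
    traceNorm (Matrix.diagonal (fun i => ((v i : ℝ) : ℂ))) = ∑ i, |v i| := by
  set D : Matrix ι ι ℂ := Matrix.diagonal (fun i => ((v i : ℝ) : ℂ)) with hD
  have hDD : Dᴴ * D = Matrix.diagonal (fun i => (((v i)^2 : ℝ) : ℂ)) := by
    rw [hD, Matrix.diagonal_conjTranspose, Matrix.diagonal_mul_diagonal]
    congr 1
    funext i
    simp [Pi.star_apply]
    push_cast
    ring
  have hPSD : (Dᴴ * D).PosSemidef := Matrix.posSemidef_conjTranspose_mul_self D
  set N : Matrix ι ι ℂ := Matrix.diagonal (fun i => ((|v i| : ℝ) : ℂ)) with hN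
  have hN0 : N.PosSemidef := Matrix.posSemidef_diagonal_iff.mpr fun i => by
    exact_mod_cast abs_nonneg (v i)
  have hNsq : N ^ 2 = Dᴴ * D := by
    rw [pow_two, hN, Matrix.diagonal_mul_diagonal, hDD]
    have hfun : (fun i => ((|v i| : ℝ) : ℂ) * ((|v i| : ℝ) : ℂ))
        = (fun i => (((v i)^2 : ℝ) : ℂ)) := by
      funext i
      rw [← Complex.ofReal_mul]
      congr 1
      rw [← sq, sq_abs]
    rw [hfun]
  have h1 : N = CFC.sqrt (Dᴴ * D) := eq_sqrt_of_sq_eq' hN0 hPSD hNsq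
  unfold traceNorm
  rw [matSqrt_eq hPSD, ← h1, hN, Matrix.trace_diagonal, Complex.re_sum]
  simp

lemma traceNorm_dephase_sub_le {ρ σ : Matrix ι ι ℂ} (hρ : ρ.IsHermitian) (hσ : σ.IsHermitian) :
    traceNorm (dephase ρ - dephase σ) ≤ traceNorm (ρ - σ) := by
  set B : Matrix ι ι ℂ := ρ - σ with hBdef
  have hB : B.IsHermitian := hρ.sub hσ
  have hdd : dephase ρ - dephase σ = Matrix.diagonal (fun i => (((B i i).re : ℝ) : ℂ)) := by
    unfold dephase
    rw [Matrix.diagonal_sub]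
    have hfun : (fun i => ρ i i - σ i i) = (fun i => (((B i i).re : ℝ) : ℂ)) := by
      funext i
      rw [← herm_diag_real hB i]
      simp [hBdef, Matrix.sub_apply]
    rw [hfun]
  rw [hdd, traceNorm_diag_real]
  have h1 : ∀ i, |(B i i).re| = |((1ᴴ * B * 1 : Matrix ι ι ℂ) i i).re| := by
    intro i
    simp
  rw [Finset.sum_congr rfl fun i _ => h1 i]
  exact sum_abs_diag_le hB (by simp) (by simp)


lemma fannes_mono {d : ℕ} (hd : 1 ≤ d) {T s : ℝ} (h0 : 0 ≤ T) (hTs : T ≤ s) (hs : s ≤ 1/2) :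
    T * Real.log d + Real.binEntropy T ≤ s * Real.log d + Real.binEntropy s := by
  have hlog : 0 ≤ Real.log d := Real.log_nonneg (by exact_mod_cast hd)
  have h1 : T * Real.log d ≤ s * Real.log d := mul_le_mul_of_nonneg_right hTs hlog
  have h2 : Real.binEntropy T ≤ Real.binEntropy s :=
    Real.binEntropy_strictMonoOn.monotoneOn
      (Set.mem_Icc.mpr ⟨h0, by norm_num; linarith⟩)
      (Set.mem_Icc.mpr ⟨by linarith, by norm_num; linarith⟩) hTs
  linarith

lemma vN_sub_vN_le {d : ℕ} {ρ σ : Matrix (Fin d) (Fin d) ℂ}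
    (hρ : IsDensity ρ) (hσ : IsDensity σ)
    {s : ℝ} (hclose : traceNorm (ρ - σ) ≤ 2 * s) (hs : s ≤ 1/2) :
    vN σ - vN ρ ≤ (s * Real.log d + Real.binEntropy s) / Real.log 2 := by
  have hρh : ρ.IsHermitian := hρ.1.1
  have hσh : σ.IsHermitian := hσ.1.1
  set W : Matrix (Fin d) (Fin d) ℂ := (hρh.eigenvectorUnitary : Matrix (Fin d) (Fin d) ℂ) with hWdef
  have hW1 : Wᴴ * W = 1 := by
    rw [← Matrix.star_eq_conjTranspose]
    exact Matrix.mem_unitaryGroup_iff'.mp hρh.eigenvectorUnitary.2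
  have hW2 : W * Wᴴ = 1 := by
    rw [← Matrix.star_eq_conjTranspose]
    exact Matrix.mem_unitaryGroup_iff.mp hρh.eigenvectorUnitary.2
  set p : Fin d → ℝ := hρh.eigenvalues with hpdef
  set q : Fin d → ℝ := fun i => ((Wᴴ * σ * W) i i).re with hqdef
  have hp0 : ∀ i, 0 ≤ p i := fun i => hρ.1.eigenvalues_nonneg i
  have hq0 : ∀ i, 0 ≤ q i := fun i =>
    psd_diag_re_nonneg (hσ.1.conjTranspose_mul_mul_same W) i
  have hp1 : ∑ i, p i = 1 := density_sum_eigen hρ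
  have hq1 : ∑ i, q i = 1 := by
    have htr : (Wᴴ * σ * W).trace = σ.trace := by
      rw [Matrix.trace_mul_cycle, hW2, one_mul]
    have h2 := congrArg Complex.re (htr.trans hσ.2)
    rw [Matrix.trace] at h2
    rw [Complex.re_sum] at h2
    simpa [hqdef, Matrix.diag] using h2
  -- d ≥ 1
  have hd : 1 ≤ d := by
    rcases Nat.eq_zero_or_pos d with rfl|h
    · exfalso; simpa using hp1
    · exact h
  -- M, the change-of-basis between the eigenbases
  set V : Matrix (Fin d) (Fin d) ℂ := (hσh.eigenvectorUnitary : Matrix (Fin d) (Fin d) ℂ) with hVdef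
  have hV1 : Vᴴ * V = 1 := by
    rw [← Matrix.star_eq_conjTranspose]
    exact Matrix.mem_unitaryGroup_iff'.mp hσh.eigenvectorUnitary.2
  have hV2 : V * Vᴴ = 1 := by
    rw [← Matrix.star_eq_conjTranspose]
    exact Matrix.mem_unitaryGroup_iff.mp hσh.eigenvectorUnitary.2
  set M : Matrix (Fin d) (Fin d) ℂ := Wᴴ * V with hM
  have hMcol : Mᴴ * M = 1 := by
    rw [hM, Matrix.conjTranspose_mul, Matrix.conjTranspose_conjTranspose]
    calc Vᴴ * W * (Wᴴ * V) = Vᴴ * (W * Wᴴ) * V := by noncomm_ring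
      _ = 1 := by rw [hW2, mul_one, hV1]
  have hMrow : M * Mᴴ = 1 := by
    rw [hM, Matrix.conjTranspose_mul, Matrix.conjTranspose_conjTranspose]
    calc Wᴴ * V * (Vᴴ * W) = Wᴴ * (V * Vᴴ) * W := by noncomm_ring
      _ = 1 := by rw [hV2, mul_one, hW1]
  have hqM : ∀ i, q i = ∑ j, hσh.eigenvalues j * ‖M i j‖^2 := by
    intro i
    rw [hqdef]
    show ((Wᴴ * σ * W) i i).re = _
    rw [conj_eq_mdm hσh W]
    exact conj_diag_re M _ i
  -- Jensen : entropy of pinched distribution is larger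
  have jensen_i : ∀ i, ∑ j, ‖M i j‖^2 * Real.negMulLog (hσh.eigenvalues j)
      ≤ Real.negMulLog (q i) := by
    intro i
    have h := Real.concaveOn_negMulLog.le_map_sum (t := Finset.univ)
      (w := fun j => ‖M i j‖^2) (p := hσh.eigenvalues)
      (fun j _ => by positivity) (row_norm_sum hMrow i)
      (fun j _ => hσ.1.eigenvalues_nonneg j)
    simp only [smul_eq_mul] at h
    have : ∑ j, ‖M i j‖^2 * hσh.eigenvalues j = q i := by
      rw [hqM i]
      exact Finset.sum_congr rfl fun j _ => mul_comm _ _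
    rwa [this] at h
  have hHq : ∑ j, Real.negMulLog (hσh.eigenvalues j) ≤ ∑ i, Real.negMulLog (q i) := by
    calc ∑ j, Real.negMulLog (hσh.eigenvalues j)
        = ∑ j, (∑ i, ‖M i j‖^2) * Real.negMulLog (hσh.eigenvalues j) := by
          apply Finset.sum_congr rfl
          intro j _
          rw [col_norm_sum hMcol j, one_mul]
      _ = ∑ i, ∑ j, ‖M i j‖^2 * Real.negMulLog (hσh.eigenvalues j) := by
          rw [Finset.sum_comm]
          apply Finset.sum_congr rfl
          intro j _
          rw [Finset.sum_mul]
      _ ≤ ∑ i, Real.negMulLog (q i) := Finset.sum_le_sum fun i _ => jensen_i i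
  -- trace-distance control of p vs q
  have hWρW : Wᴴ * ρ * W = Matrix.diagonal (fun i => ((p i : ℝ) : ℂ)) := by
    nth_rewrite 1 [hρh.spectral_theorem]
    rw [Unitary.conjStarAlgAut_apply, Matrix.star_eq_conjTranspose]
    calc Wᴴ * (W * Matrix.diagonal (RCLike.ofReal ∘ hρh.eigenvalues) * Wᴴ) * W
        = (Wᴴ * W) * Matrix.diagonal (RCLike.ofReal ∘ hρh.eigenvalues) * (Wᴴ * W) := by
          noncomm_ring
      _ = Matrix.diagonal (RCLike.ofReal ∘ hρh.eigenvalues) := by rw [hW1, one_mul, mul_one]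
      _ = Matrix.diagonal (fun i => ((p i : ℝ) : ℂ)) := rfl
  have hpq : ∀ i, p i - q i = ((Wᴴ * (ρ - σ) * W) i i).re := by
    intro i
    have hsplit : Wᴴ * (ρ - σ) * W = Wᴴ * ρ * W - Wᴴ * σ * W := by noncomm_ring
    rw [hsplit, Matrix.sub_apply, Complex.sub_re, hWρW]
    simp [hqdef, Matrix.diagonal_apply_eq]
  have hBh : (ρ - σ).IsHermitian := hρh.sub hσh
  have hTd : ∑ i, |p i - q i| ≤ 2 * s := by
    calc ∑ i, |p i - q i| = ∑ i, |((Wᴴ * (ρ - σ) * W) i i).re| :=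
          Finset.sum_congr rfl fun i _ => by rw [hpq i]
      _ ≤ traceNorm (ρ - σ) := sum_abs_diag_le hBh hW1 hW2
      _ ≤ 2 * s := hclose
  -- classical Fannes
  have hcf := classical_fannes q p hq0 hp0 hq1 hp1
  have habs_comm : ∑ i, |q i - p i| = ∑ i, |p i - q i| :=
    Finset.sum_congr rfl fun i _ => abs_sub_comm _ _
  rw [habs_comm] at hcf
  have hT0 : 0 ≤ (∑ i, |p i - q i|) / 2 := by positivity
  have hTs : (∑ i, |p i - q i|) / 2 ≤ s := by linarith
  have hmono := fannes_mono hd hT0 hTs hs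
  -- put everything together
  have hvρ : vN ρ = (∑ i, Real.negMulLog (p i)) / Real.log 2 := vN_eq_sum hρh
  have hvσ : vN σ = (∑ j, Real.negMulLog (hσh.eigenvalues j)) / Real.log 2 := vN_eq_sum hσh
  have hlog2 : (0:ℝ) < Real.log 2 := Real.log_pos (by norm_num)
  rw [hvρ, hvσ, div_sub_div_same, div_le_div_iff₀ hlog2 hlog2]
  have hfinal : ∑ j, Real.negMulLog (hσh.eigenvalues j) - ∑ i, Real.negMulLog (p i)
      ≤ s * Real.log d + Real.binEntropy s := by
    calc ∑ j, Real.negMulLog (hσh.eigenvalues j) - ∑ i, Real.negMulLog (p i)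
        ≤ ∑ i, Real.negMulLog (q i) - ∑ i, Real.negMulLog (p i) := by linarith
      _ ≤ _ := by linarith
  calc (∑ j, Real.negMulLog (hσh.eigenvalues j) - ∑ i, Real.negMulLog (p i)) * Real.log 2
      ≤ (s * Real.log d + Real.binEntropy s) * Real.log 2 :=
        mul_le_mul_of_nonneg_right hfinal (le_of_lt hlog2)
    _ = _ := rfl


lemma binEnt_eq (x : ℝ) : binEnt x = Real.binEntropy x / Real.log 2 := by
  unfold binEnt
  rw [Real.binEntropy]
  rw [Real.log_inv, Real.log_inv, Real.logb, Real.logb]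
  ring

/-- Asymptotic continuity of the relative entropy of coherence. -/
theorem Cr_asymptotically_continuous {d : ℕ} (ρ σ : Matrix (Fin d) (Fin d) ℂ)
    (hρ : IsDensity ρ) (hσ : IsDensity σ)
    (ε : ℝ) (hε1 : ε ≤ 1) (hclose : traceNorm (ρ - σ) ≤ ε) :
    |Cr ρ - Cr σ| ≤ ε * Real.logb 2 d + 2 * binEnt (ε / 2) := by
  have hρh : ρ.IsHermitian := hρ.1.1
  have hσh : σ.IsHermitian := hσ.1.1
  have hε0 : 0 ≤ ε := by
    refine le_trans ?_ hclose
    rw [traceNorm_eq_sum_abs (hρh.sub hσh)]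
    exact Finset.sum_nonneg fun i _ => abs_nonneg _
  have hs : ε / 2 ≤ 1 / 2 := by linarith
  have hcl : traceNorm (ρ - σ) ≤ 2 * (ε / 2) := by linarith
  have hcl' : traceNorm (σ - ρ) ≤ 2 * (ε / 2) := by
    rw [← neg_sub ρ σ, traceNorm_neg]; linarith
  have hρd : IsDensity (dephase ρ) := isDensity_dephase hρ
  have hσd : IsDensity (dephase σ) := isDensity_dephase hσ
  have hcld : traceNorm (dephase ρ - dephase σ) ≤ 2 * (ε / 2) :=
    le_trans (traceNorm_dephase_sub_le hρh hσh) hcl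
  have hcld' : traceNorm (dephase σ - dephase ρ) ≤ 2 * (ε / 2) := by
    rw [← neg_sub (dephase ρ) (dephase σ), traceNorm_neg]
    exact le_trans (traceNorm_dephase_sub_le hρh hσh) hcl
  set K : ℝ := (ε / 2 * Real.log d + Real.binEntropy (ε / 2)) / Real.log 2 with hK
  have h1 : vN σ - vN ρ ≤ K := vN_sub_vN_le hρ hσ hcl hs
  have h2 : vN ρ - vN σ ≤ K := vN_sub_vN_le hσ hρ hcl' hs
  have h3 : vN (dephase σ) - vN (dephase ρ) ≤ K := vN_sub_vN_le hρd hσd hcld hs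
  have h4 : vN (dephase ρ) - vN (dephase σ) ≤ K := vN_sub_vN_le hσd hρd hcld' hs
  have hsum : ε * Real.logb 2 d + 2 * binEnt (ε / 2) = 2 * K := by
    rw [binEnt_eq, Real.logb, hK]
    have : Real.log 2 ≠ 0 := ne_of_gt (Real.log_pos (by norm_num))
    field_simp
  rw [hsum]
  have hCr : Cr ρ - Cr σ = (vN (dephase ρ) - vN (dephase σ)) + (vN σ - vN ρ) := by
    unfold Cr; ring
  rw [hCr, abs_le]
  constructor
  · linarith
  · linarith


end Coherence
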